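/- Every graph in the family 𝒢 of order n satisfies γ_dR(G) = 11n/10; that is, for every graph G, the graph G_Q of order n = 10·|V(G)| satisfies γ_dR(G_Q) = 11·|V(G)|. -/
import Mathlib

/-- A double Roman dominating function on a simple graph `G`:
values in `{0,1,2,3}`, every vertex with value `0` has two neighbors with value `2`
or one neighbor with value `3`, and every vertex with value `1` has a neighbor with
value at least `2`. -/
def IsDRDF {V : Type*} (G : SimpleGraph V) (f : V → ℕ) : Prop :=
  (∀ v, f v ≤ 3) ∧
  (∀ v, f v = 0 →
    (∃ u w, u ≠ w ∧ G.Adj v u ∧ G.Adj v w ∧ f u = 2 ∧ f w = 2) ∨ ∃ u, G.Adj v u ∧ f u = 3) ∧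
  (∀ v, f v = 1 → ∃ u, G.Adj v u ∧ 2 ≤ f u)

/-- The double Roman domination number: the minimum weight of a DRDF. -/
noncomputable def gammaDR {V : Type*} [Fintype V] (G : SimpleGraph V) : ℕ :=
  sInf {w | ∃ f, IsDRDF G f ∧ ∑ v, f v = w}

/-- The vertices that a copy of `Q` (two `5`-cycles joined by an edge) contributes to
`G_Q` besides the identified degree-three vertex: the first `5`-cycle minus its vertex
`0` (which is identified with a vertex of `G`), and the whole second `5`-cycle. -/
abbrev QTail : Type := {x : Fin 5 // x.val ≠ 0} ⊕ Fin 5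

/-- Base relation for `G_Q`: `G` itself together with, for each vertex `w` of `G`, a
copy of `Q` whose degree-three vertex (vertex `0` of the first `5`-cycle) is identified
with `w`. -/
def gqR {W : Type} (G : SimpleGraph W) :
    (W ⊕ W × QTail) → (W ⊕ W × QTail) → Prop
  | .inl a, .inl b => G.Adj a b
  | .inl a, .inr (w, .inl x) => a = w ∧ (x.1.val = 1 ∨ x.1.val = 4)
  | .inl a, .inr (w, .inr y) => a = w ∧ y.val = 0
  | .inr (w, .inl x), .inr (w', .inl y) => w = w' ∧ (x.1.val + 1) % 5 = y.1.val
  | .inr (w, .inr x), .inr (w', .inr y) => w = w' ∧ (x.val + 1) % 5 = y.val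
  | _, _ => False

/-- The graph `G_Q` obtained from `G` by attaching, at every vertex of `G`, a copy of
`Q` identified at a vertex of degree three. -/
def GQ {W : Type} (G : SimpleGraph W) : SimpleGraph (W ⊕ W × QTail) :=
  SimpleGraph.fromRel (gqR G)

/-! ### Auxiliary finite lemmas (minimum weights on the two 5-cycles) -/

set_option synthInstance.maxSize 2000 in
set_option maxHeartbeats 1000000 in
lemma cycF (a c0 c1 c2 c3 c4 : Fin 4)
  (h : (c0 = 0 → ((c1=2∧c4=2)∨(c1=2∧a=2)∨(c4=2∧a=2)) ∨ (c1=3∨c4=3∨a=3)) ∧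
   (c0 = 1 → (2 ≤ c1 ∨ 2 ≤ c4 ∨ 2 ≤ a)) ∧
   (c1 = 0 → (c0=2∧c2=2) ∨ c0=3 ∨ c2=3) ∧
   (c1 = 1 → 2 ≤ c0 ∨ 2 ≤ c2) ∧
   (c2 = 0 → (c1=2∧c3=2) ∨ c1=3 ∨ c3=3) ∧
   (c2 = 1 → 2 ≤ c1 ∨ 2 ≤ c3) ∧
   (c3 = 0 → (c2=2∧c4=2) ∨ c2=3 ∨ c4=3) ∧
   (c3 = 1 → 2 ≤ c2 ∨ 2 ≤ c4) ∧
   (c4 = 0 → (c3=2∧c0=2) ∨ c3=3 ∨ c0=3) ∧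
   (c4 = 1 → 2 ≤ c3 ∨ 2 ≤ c0)) :
  6 ≤ c0.val+c1.val+c2.val+c3.val+c4.val + (if 2 ≤ a.val then 1 else 0) := by
  revert h; revert a c0 c1 c2 c3 c4; decide

lemma cycN (a c0 c1 c2 c3 c4 : ℕ) (hb : a ≤ 3 ∧ c0 ≤ 3 ∧ c1 ≤ 3 ∧ c2 ≤ 3 ∧ c3 ≤ 3 ∧ c4 ≤ 3)
  (h : (c0 = 0 → ((c1=2∧c4=2)∨(c1=2∧a=2)∨(c4=2∧a=2)) ∨ (c1=3∨c4=3∨a=3)) ∧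
   (c0 = 1 → (2 ≤ c1 ∨ 2 ≤ c4 ∨ 2 ≤ a)) ∧
   (c1 = 0 → (c0=2∧c2=2) ∨ c0=3 ∨ c2=3) ∧
   (c1 = 1 → 2 ≤ c0 ∨ 2 ≤ c2) ∧
   (c2 = 0 → (c1=2∧c3=2) ∨ c1=3 ∨ c3=3) ∧
   (c2 = 1 → 2 ≤ c1 ∨ 2 ≤ c3) ∧
   (c3 = 0 → (c2=2∧c4=2) ∨ c2=3 ∨ c4=3) ∧
   (c3 = 1 → 2 ≤ c2 ∨ 2 ≤ c4) ∧
   (c4 = 0 → (c3=2∧c0=2) ∨ c3=3 ∨ c0=3) ∧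
   (c4 = 1 → 2 ≤ c3 ∨ 2 ≤ c0)) :
  6 ≤ c0+c1+c2+c3+c4 + (if 2 ≤ a then 1 else 0) := by
  obtain ⟨b1,b2,b3,b4,b5,b6⟩ := hb
  have := cycF ⟨a, by omega⟩ ⟨c0, by omega⟩ ⟨c1, by omega⟩ ⟨c2, by omega⟩ ⟨c3, by omega⟩ ⟨c4, by omega⟩
    (by simp only [Fin.ext_iff, Fin.le_def, Fin.val_one, Fin.val_zero]; norm_num; exact h)
  simpa using this

set_option synthInstance.maxSize 2000 in
set_option maxHeartbeats 1000000 in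
lemma pathF (a p1 p2 p3 p4 : Fin 4)
  (h : (p1 = 0 → (p2=2∧a=2) ∨ p2=3 ∨ a=3) ∧
   (p1 = 1 → 2 ≤ p2 ∨ 2 ≤ a) ∧
   (p2 = 0 → (p1=2∧p3=2) ∨ p1=3 ∨ p3=3) ∧
   (p2 = 1 → 2 ≤ p1 ∨ 2 ≤ p3) ∧
   (p3 = 0 → (p2=2∧p4=2) ∨ p2=3 ∨ p4=3) ∧
   (p3 = 1 → 2 ≤ p2 ∨ 2 ≤ p4) ∧
   (p4 = 0 → (p3=2∧a=2) ∨ p3=3 ∨ a=3) ∧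
   (p4 = 1 → 2 ≤ p3 ∨ 2 ≤ a)) :
  5 ≤ p1.val+p2.val+p3.val+p4.val + (if a.val = 2 then 1 else 0) + (if a.val = 3 then 2 else 0) := by
  revert h; revert a p1 p2 p3 p4; decide

lemma pathN (a p1 p2 p3 p4 : ℕ) (hb : a ≤ 3 ∧ p1 ≤ 3 ∧ p2 ≤ 3 ∧ p3 ≤ 3 ∧ p4 ≤ 3)
  (h : (p1 = 0 → (p2=2∧a=2) ∨ p2=3 ∨ a=3) ∧
   (p1 = 1 → 2 ≤ p2 ∨ 2 ≤ a) ∧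
   (p2 = 0 → (p1=2∧p3=2) ∨ p1=3 ∨ p3=3) ∧
   (p2 = 1 → 2 ≤ p1 ∨ 2 ≤ p3) ∧
   (p3 = 0 → (p2=2∧p4=2) ∨ p2=3 ∨ p4=3) ∧
   (p3 = 1 → 2 ≤ p2 ∨ 2 ≤ p4) ∧
   (p4 = 0 → (p3=2∧a=2) ∨ p3=3 ∨ a=3) ∧
   (p4 = 1 → 2 ≤ p3 ∨ 2 ≤ a)) :
  5 ≤ p1+p2+p3+p4 + (if a = 2 then 1 else 0) + (if a = 3 then 2 else 0) := by
  obtain ⟨b1,b2,b3,b4,b5⟩ := hb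
  have := pathF ⟨a, by omega⟩ ⟨p1, by omega⟩ ⟨p2, by omega⟩ ⟨p3, by omega⟩ ⟨p4, by omega⟩
    (by simp only [Fin.ext_iff, Fin.le_def, Fin.val_one, Fin.val_zero]; norm_num; exact h)
  simpa using this

/-! ### Neighborhood structure of the tails in `G_Q` -/

section Nbr

variable {W : Type} {G : SimpleGraph W} {w : W} {u : W ⊕ W × QTail}

lemma nbr2 {i : Fin 5} (h : (GQ G).Adj (Sum.inr (w, Sum.inr i)) u) :
    (i.val = 0 ∧ u = Sum.inl w) ∨
    ∃ j : Fin 5, ((i.val+1)%5 = j.val ∨ (j.val+1)%5 = i.val) ∧ u = Sum.inr (w, Sum.inr j) := by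
  rw [GQ, SimpleGraph.fromRel_adj] at h
  obtain ⟨hne, h | h⟩ := h <;> rcases u with b | ⟨w', x | y⟩ <;> simp [gqR] at h <;> aesop

lemma nbr1 {x : {x : Fin 5 // x.val ≠ 0}} (h : (GQ G).Adj (Sum.inr (w, Sum.inl x)) u) :
    ((x.1.val = 1 ∨ x.1.val = 4) ∧ u = Sum.inl w) ∨
    ∃ y : {x : Fin 5 // x.val ≠ 0}, ((x.1.val+1)%5 = y.1.val ∨ (y.1.val+1)%5 = x.1.val) ∧
      u = Sum.inr (w, Sum.inl y) := by
  rw [GQ, SimpleGraph.fromRel_adj] at h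
  obtain ⟨hne, h | h⟩ := h <;> rcases u with b | ⟨w', y | y⟩ <;> simp [gqR] at h <;> aesop

lemma nbr2_0 (h : (GQ G).Adj (Sum.inr (w, Sum.inr 0)) u) :
    u = Sum.inl w ∨ u = Sum.inr (w, Sum.inr 1) ∨ u = Sum.inr (w, Sum.inr 4) := by
  rcases nbr2 h with ⟨h0, rfl⟩ | ⟨j, hj, rfl⟩
  · exact Or.inl rfl
  · have hj' : j = 1 ∨ j = 4 := by clear h; revert j; decide
    rcases hj' with rfl | rfl <;> simp

lemma nbr2_1 (h : (GQ G).Adj (Sum.inr (w, Sum.inr 1)) u) :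
    u = Sum.inr (w, Sum.inr 2) ∨ u = Sum.inr (w, Sum.inr 0) := by
  rcases nbr2 h with ⟨h0, rfl⟩ | ⟨j, hj, rfl⟩
  · exfalso; revert h0; decide
  · have hj' : j = 2 ∨ j = 0 := by clear h; revert j; decide
    rcases hj' with rfl | rfl <;> simp

lemma nbr2_2 (h : (GQ G).Adj (Sum.inr (w, Sum.inr 2)) u) :
    u = Sum.inr (w, Sum.inr 3) ∨ u = Sum.inr (w, Sum.inr 1) := by
  rcases nbr2 h with ⟨h0, rfl⟩ | ⟨j, hj, rfl⟩
  · exfalso; revert h0; decide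
  · have hj' : j = 3 ∨ j = 1 := by clear h; revert j; decide
    rcases hj' with rfl | rfl <;> simp

lemma nbr2_3 (h : (GQ G).Adj (Sum.inr (w, Sum.inr 3)) u) :
    u = Sum.inr (w, Sum.inr 4) ∨ u = Sum.inr (w, Sum.inr 2) := by
  rcases nbr2 h with ⟨h0, rfl⟩ | ⟨j, hj, rfl⟩
  · exfalso; revert h0; decide
  · have hj' : j = 4 ∨ j = 2 := by clear h; revert j; decide
    rcases hj' with rfl | rfl <;> simp

lemma nbr2_4 (h : (GQ G).Adj (Sum.inr (w, Sum.inr 4)) u) :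
    u = Sum.inr (w, Sum.inr 0) ∨ u = Sum.inr (w, Sum.inr 3) := by
  rcases nbr2 h with ⟨h0, rfl⟩ | ⟨j, hj, rfl⟩
  · exfalso; revert h0; decide
  · have hj' : j = 0 ∨ j = 3 := by clear h; revert j; decide
    rcases hj' with rfl | rfl <;> simp

lemma nbr1_1 (h : (GQ G).Adj (Sum.inr (w, Sum.inl ⟨1, by decide⟩)) u) :
    u = Sum.inl w ∨ u = Sum.inr (w, Sum.inl (⟨2, by decide⟩ : {x : Fin 5 // x.val ≠ 0})) := by
  rcases nbr1 h with ⟨h0, rfl⟩ | ⟨y, hj, rfl⟩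
  · exact Or.inl rfl
  · have hj' : y = (⟨2, by decide⟩ : {x : Fin 5 // x.val ≠ 0}) := by clear h; revert y; decide
    subst hj'; simp

lemma nbr1_2 (h : (GQ G).Adj (Sum.inr (w, Sum.inl ⟨2, by decide⟩)) u) :
    u = Sum.inr (w, Sum.inl (⟨3, by decide⟩ : {x : Fin 5 // x.val ≠ 0})) ∨
    u = Sum.inr (w, Sum.inl (⟨1, by decide⟩ : {x : Fin 5 // x.val ≠ 0})) := by
  rcases nbr1 h with ⟨h0, rfl⟩ | ⟨y, hj, rfl⟩
  · exfalso; revert h0; decide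
  · have hj' : y = (⟨3, by decide⟩ : {x : Fin 5 // x.val ≠ 0}) ∨
        y = (⟨1, by decide⟩ : {x : Fin 5 // x.val ≠ 0}) := by clear h; revert y; decide
    rcases hj' with rfl | rfl <;> simp

lemma nbr1_3 (h : (GQ G).Adj (Sum.inr (w, Sum.inl ⟨3, by decide⟩)) u) :
    u = Sum.inr (w, Sum.inl (⟨4, by decide⟩ : {x : Fin 5 // x.val ≠ 0})) ∨
    u = Sum.inr (w, Sum.inl (⟨2, by decide⟩ : {x : Fin 5 // x.val ≠ 0})) := by
  rcases nbr1 h with ⟨h0, rfl⟩ | ⟨y, hj, rfl⟩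
  · exfalso; revert h0; decide
  · have hj' : y = (⟨4, by decide⟩ : {x : Fin 5 // x.val ≠ 0}) ∨
        y = (⟨2, by decide⟩ : {x : Fin 5 // x.val ≠ 0}) := by clear h; revert y; decide
    rcases hj' with rfl | rfl <;> simp

lemma nbr1_4 (h : (GQ G).Adj (Sum.inr (w, Sum.inl ⟨4, by decide⟩)) u) :
    u = Sum.inl w ∨ u = Sum.inr (w, Sum.inl (⟨3, by decide⟩ : {x : Fin 5 // x.val ≠ 0})) := by
  rcases nbr1 h with ⟨h0, rfl⟩ | ⟨y, hj, rfl⟩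
  · exact Or.inl rfl
  · have hj' : y = (⟨3, by decide⟩ : {x : Fin 5 // x.val ≠ 0}) := by clear h; revert y; decide
    subst hj'; simp

end Nbr

/-! ### Summing over the tail -/

lemma sum_qsub (g : {x : Fin 5 // x.val ≠ 0} → ℕ) :
    ∑ x, g x = g ⟨1, by decide⟩ + g ⟨2, by decide⟩ + g ⟨3, by decide⟩ + g ⟨4, by decide⟩ := by
  rw [show (Finset.univ : Finset {x : Fin 5 // x.val ≠ 0}) =
      {⟨1, by decide⟩, ⟨2, by decide⟩, ⟨3, by decide⟩, ⟨4, by decide⟩} from by decide]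
  simp [Finset.sum_insert, Finset.mem_insert]
  ring

/-! ### Generic extraction lemmas -/

section Extract

variable {V : Type*} {G' : SimpleGraph V} {f : V → ℕ} {v n1 n2 n3 : V}

lemma zero_two
    (hc : (∃ u u', u ≠ u' ∧ G'.Adj v u ∧ G'.Adj v u' ∧ f u = 2 ∧ f u' = 2) ∨
      ∃ u, G'.Adj v u ∧ f u = 3)
    (hnbr : ∀ u, G'.Adj v u → u = n1 ∨ u = n2) :
    (f n1 = 2 ∧ f n2 = 2) ∨ f n1 = 3 ∨ f n2 = 3 := by
  rcases hc with ⟨u, u', hne, hu, hu', f2, f2'⟩ | ⟨u, hu, f3⟩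
  · rcases hnbr u hu with rfl | rfl <;> rcases hnbr u' hu' with rfl | rfl <;>
      first | tauto | exact absurd rfl hne
  · rcases hnbr u hu with rfl | rfl <;> tauto

lemma zero_three
    (hc : (∃ u u', u ≠ u' ∧ G'.Adj v u ∧ G'.Adj v u' ∧ f u = 2 ∧ f u' = 2) ∨
      ∃ u, G'.Adj v u ∧ f u = 3)
    (hnbr : ∀ u, G'.Adj v u → u = n1 ∨ u = n2 ∨ u = n3) :
    ((f n1 = 2 ∧ f n2 = 2) ∨ (f n1 = 2 ∧ f n3 = 2) ∨ (f n2 = 2 ∧ f n3 = 2)) ∨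
      (f n1 = 3 ∨ f n2 = 3 ∨ f n3 = 3) := by
  rcases hc with ⟨u, u', hne, hu, hu', f2, f2'⟩ | ⟨u, hu, f3⟩
  · rcases hnbr u hu with rfl | rfl | rfl <;> rcases hnbr u' hu' with rfl | rfl | rfl <;>
      first | tauto | exact absurd rfl hne
  · rcases hnbr u hu with rfl | rfl | rfl <;> tauto

lemma one_two (hc : ∃ u, G'.Adj v u ∧ 2 ≤ f u)
    (hnbr : ∀ u, G'.Adj v u → u = n1 ∨ u = n2) :
    2 ≤ f n1 ∨ 2 ≤ f n2 := by
  obtain ⟨u, hu, h2⟩ := hc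
  rcases hnbr u hu with rfl | rfl <;> tauto

lemma one_three (hc : ∃ u, G'.Adj v u ∧ 2 ≤ f u)
    (hnbr : ∀ u, G'.Adj v u → u = n1 ∨ u = n2 ∨ u = n3) :
    2 ≤ f n1 ∨ 2 ≤ f n2 ∨ 2 ≤ f n3 := by
  obtain ⟨u, hu, h2⟩ := hc
  rcases hnbr u hu with rfl | rfl | rfl <;> tauto

end Extract

/-! ### The per-copy lower bound -/

lemma copy_bound {W : Type} {G : SimpleGraph W} {f : (W ⊕ W × QTail) → ℕ}
    (hf : IsDRDF (GQ G) f) (w : W) :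
    11 ≤ f (Sum.inl w) + ∑ t : QTail, f (Sum.inr (w, t)) := by
  obtain ⟨hb, h0, h1⟩ := hf
  have hcyc := cycN (f (Sum.inl w)) (f (Sum.inr (w, Sum.inr 0))) (f (Sum.inr (w, Sum.inr 1)))
    (f (Sum.inr (w, Sum.inr 2))) (f (Sum.inr (w, Sum.inr 3))) (f (Sum.inr (w, Sum.inr 4)))
    ⟨hb _, hb _, hb _, hb _, hb _, hb _⟩
    ⟨fun hz => zero_three (h0 _ hz) (fun u hu => by
        rcases nbr2_0 hu with h | h | h
        exacts [Or.inr (Or.inr h), Or.inl h, Or.inr (Or.inl h)]),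
     fun hz => one_three (h1 _ hz) (fun u hu => by
        rcases nbr2_0 hu with h | h | h
        exacts [Or.inr (Or.inr h), Or.inl h, Or.inr (Or.inl h)]),
     fun hz => zero_two (h0 _ hz) (fun u hu => (nbr2_1 hu).symm),
     fun hz => one_two (h1 _ hz) (fun u hu => (nbr2_1 hu).symm),
     fun hz => zero_two (h0 _ hz) (fun u hu => (nbr2_2 hu).symm),
     fun hz => one_two (h1 _ hz) (fun u hu => (nbr2_2 hu).symm),
     fun hz => zero_two (h0 _ hz) (fun u hu => (nbr2_3 hu).symm),
     fun hz => one_two (h1 _ hz) (fun u hu => (nbr2_3 hu).symm),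
     fun hz => zero_two (h0 _ hz) (fun u hu => (nbr2_4 hu).symm),
     fun hz => one_two (h1 _ hz) (fun u hu => (nbr2_4 hu).symm)⟩
  have hpath := pathN (f (Sum.inl w)) (f (Sum.inr (w, Sum.inl ⟨1, by decide⟩)))
    (f (Sum.inr (w, Sum.inl ⟨2, by decide⟩))) (f (Sum.inr (w, Sum.inl ⟨3, by decide⟩)))
    (f (Sum.inr (w, Sum.inl ⟨4, by decide⟩)))
    ⟨hb _, hb _, hb _, hb _, hb _⟩
    ⟨fun hz => zero_two (h0 _ hz) (fun u hu => (nbr1_1 hu).symm),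
     fun hz => one_two (h1 _ hz) (fun u hu => (nbr1_1 hu).symm),
     fun hz => zero_two (h0 _ hz) (fun u hu => (nbr1_2 hu).symm),
     fun hz => one_two (h1 _ hz) (fun u hu => (nbr1_2 hu).symm),
     fun hz => zero_two (h0 _ hz) (fun u hu => (nbr1_3 hu).symm),
     fun hz => one_two (h1 _ hz) (fun u hu => (nbr1_3 hu).symm),
     fun hz => zero_two (h0 _ hz) (fun u hu => (nbr1_4 hu).symm),
     fun hz => one_two (h1 _ hz) (fun u hu => (nbr1_4 hu).symm)⟩
  have hsum : ∑ t : QTail, f (Sum.inr (w, t)) =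
      (f (Sum.inr (w, Sum.inl ⟨1, by decide⟩)) + f (Sum.inr (w, Sum.inl ⟨2, by decide⟩)) +
       f (Sum.inr (w, Sum.inl ⟨3, by decide⟩)) + f (Sum.inr (w, Sum.inl ⟨4, by decide⟩))) +
      (f (Sum.inr (w, Sum.inr 0)) + f (Sum.inr (w, Sum.inr 1)) + f (Sum.inr (w, Sum.inr 2)) +
       f (Sum.inr (w, Sum.inr 3)) + f (Sum.inr (w, Sum.inr 4))) := by
    rw [Fintype.sum_sum_type, sum_qsub (fun x => f (Sum.inr (w, Sum.inl x))),
      Fin.sum_univ_five]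
  rw [hsum]
  have hble := hb (Sum.inl w)
  split_ifs at hcyc hpath <;> omega

/-! ### The explicit optimal function for the upper bound -/

def myF {W : Type} : (W ⊕ W × QTail) → ℕ
  | .inl _ => 3
  | .inr (_, .inl x) => if x.1.val = 2 then 3 else 0
  | .inr (_, .inr y) => if y.val = 2 then 3 else if y.val = 4 then 2 else 0

lemma myF_isDRDF {W : Type} (G : SimpleGraph W) : IsDRDF (GQ G) (myF) := by
  refine ⟨?_, ?_, ?_⟩
  · rintro (a | ⟨w, x | y⟩) <;> dsimp [myF] <;> first | omega | (split_ifs <;> omega)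
  · rintro (a | ⟨w, ⟨x, hx⟩ | y⟩) hv
    · simp [myF] at hv
    · right
      fin_cases x
      · exact absurd rfl hx
      · refine ⟨Sum.inr (w, Sum.inl ⟨2, by decide⟩), ?_, rfl⟩
        rw [GQ, SimpleGraph.fromRel_adj]
        exact ⟨by simp, Or.inl ⟨rfl, rfl⟩⟩
      · exfalso; simp [myF] at hv
      · refine ⟨Sum.inr (w, Sum.inl ⟨2, by decide⟩), ?_, rfl⟩
        rw [GQ, SimpleGraph.fromRel_adj]
        exact ⟨by simp, Or.inr ⟨rfl, rfl⟩⟩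
      · refine ⟨Sum.inl w, ?_, rfl⟩
        rw [GQ, SimpleGraph.fromRel_adj]
        exact ⟨by simp, Or.inr ⟨rfl, Or.inr rfl⟩⟩
    · right
      fin_cases y
      · refine ⟨Sum.inl w, ?_, rfl⟩
        rw [GQ, SimpleGraph.fromRel_adj]
        exact ⟨by simp, Or.inr ⟨rfl, rfl⟩⟩
      · refine ⟨Sum.inr (w, Sum.inr 2), ?_, rfl⟩
        rw [GQ, SimpleGraph.fromRel_adj]
        exact ⟨by simp, Or.inl ⟨rfl, rfl⟩⟩
      · exfalso; simp [myF] at hv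
      · refine ⟨Sum.inr (w, Sum.inr 2), ?_, rfl⟩
        rw [GQ, SimpleGraph.fromRel_adj]
        exact ⟨by simp, Or.inr ⟨rfl, rfl⟩⟩
      · exfalso; simp [myF] at hv
  · rintro (a | ⟨w, x | y⟩) hv <;> dsimp [myF] at hv <;>
      first | omega | (split_ifs at hv <;> omega)

lemma myF_sum {W : Type} [Fintype W] :
    ∑ v : W ⊕ W × QTail, myF v = 11 * Fintype.card W := by
  rw [Fintype.sum_sum_type, Fintype.sum_prod_type]
  have h1 : ∑ a : W, myF (Sum.inl a : W ⊕ W × QTail) = 3 * Fintype.card W := by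
    simp [myF, Finset.sum_const, mul_comm]
  have h2 : ∀ w : W, ∑ t : QTail, myF (Sum.inr (w, t) : W ⊕ W × QTail) = 8 := by
    intro w
    rw [Fintype.sum_sum_type, sum_qsub (fun x => myF (Sum.inr (w, Sum.inl x) : W ⊕ W × QTail)),
      Fin.sum_univ_five]
    rfl
  rw [h1]
  simp only [h2, Finset.sum_const, smul_eq_mul, Finset.card_univ]
  ring

/-! ### Main theorem -/

/-- Every member of `𝒢` satisfies `γ_dR = 11n/10`: for every graph `G`, the graph
`G_Q` has order `10·|V(G)|` and `γ_dR(G_Q) = 11·|V(G)|`. -/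
theorem gammaDR_GQ_eq {W : Type} [Fintype W] (G : SimpleGraph W) :
    Fintype.card (W ⊕ W × QTail) = 10 * Fintype.card W ∧
      gammaDR (GQ G) = 11 * Fintype.card W := by
  constructor
  · have hq : Fintype.card QTail = 9 := by decide
    rw [Fintype.card_sum, Fintype.card_prod, hq]
    ring
  · have hmem : 11 * Fintype.card W ∈ {w | ∃ f, IsDRDF (GQ G) f ∧ ∑ v, f v = w} :=
      ⟨myF, myF_isDRDF G, myF_sum⟩
    refine le_antisymm (Nat.sInf_le hmem) (le_csInf ⟨_, hmem⟩ ?_)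
    rintro m ⟨f, hf, rfl⟩
    rw [Fintype.sum_sum_type, Fintype.sum_prod_type]
    calc 11 * Fintype.card W = ∑ _w : W, 11 := by
          simp [Finset.sum_const, Finset.card_univ, mul_comm]
      _ ≤ ∑ w : W, (f (Sum.inl w) + ∑ t : QTail, f (Sum.inr (w, t))) :=
          Finset.sum_le_sum fun w _ => copy_bound hf w
      _ = ∑ w : W, f (Sum.inl w) + ∑ w : W, ∑ t : QTail, f (Sum.inr (w, t)) :=
          Finset.sum_add_distrib
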